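/- The matrix function B^{ZC}(τ) = B₂₂(τ)^{-1} B₂₁(τ), where the block matrix [[B₁₁,B₁₂],[B₂₁,B₂₂]](τ) = exp(τ·[[M, −2Q^⊤Q],[−H, −M^⊤]]), satisfies the matrix Riccati ODE dB^{ZC}/dτ = B^{ZC}M + M^⊤B^{ZC} + 2B^{ZC}Q^⊤Q B^{ZC} − H with B^{ZC}(0) = 0, on any interval where B₂₂(τ) is invertible. -/

import Mathlib

open Matrix NormedSpace

section aux
attribute [local instance] Matrix.linftyOpNormedRing Matrix.linftyOpNormedAlgebra

variable {d : ℕ}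

private def blkLM₂₁ (d : ℕ) :
    Matrix (Fin d ⊕ Fin d) (Fin d ⊕ Fin d) ℝ →ₗ[ℝ] Matrix (Fin d) (Fin d) ℝ where
  toFun X := X.toBlocks₂₁
  map_add' _ _ := rfl
  map_smul' _ _ := rfl

private def blkLM₂₂ (d : ℕ) :
    Matrix (Fin d ⊕ Fin d) (Fin d ⊕ Fin d) ℝ →ₗ[ℝ] Matrix (Fin d) (Fin d) ℝ where
  toFun X := X.toBlocks₂₂
  map_add' _ _ := rfl
  map_smul' _ _ := rfl

private def entryLM (d : ℕ) (i j : Fin d) :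
    Matrix (Fin d) (Fin d) ℝ →ₗ[ℝ] ℝ where
  toFun X := X i j
  map_add' _ _ := rfl
  map_smul' _ _ := rfl

private lemma mul_fromBlocks_toBlocks₂₁ (X : Matrix (Fin d ⊕ Fin d) (Fin d ⊕ Fin d) ℝ)
    (a b c e : Matrix (Fin d) (Fin d) ℝ) :
    (X * fromBlocks a b c e).toBlocks₂₁ = X.toBlocks₂₁ * a + X.toBlocks₂₂ * c := by
  rw [← fromBlocks_toBlocks X, fromBlocks_multiply]
  simp [toBlocks_fromBlocks₂₁, toBlocks_fromBlocks₂₂]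

private lemma mul_fromBlocks_toBlocks₂₂ (X : Matrix (Fin d ⊕ Fin d) (Fin d ⊕ Fin d) ℝ)
    (a b c e : Matrix (Fin d) (Fin d) ℝ) :
    (X * fromBlocks a b c e).toBlocks₂₂ = X.toBlocks₂₁ * b + X.toBlocks₂₂ * e := by
  rw [← fromBlocks_toBlocks X, fromBlocks_multiply]
  simp [toBlocks_fromBlocks₂₁, toBlocks_fromBlocks₂₂]

private theorem riccati_aux (d : ℕ) (M Q H : Matrix (Fin d) (Fin d) ℝ) (τ : ℝ)
    (h : IsUnit ((exp (τ • fromBlocks M (-(2 : ℝ) • (Qᵀ * Q)) (-H) (-Mᵀ))).toBlocks₂₂).det)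
    (i j : Fin d) :
    HasDerivAt (fun t =>
        (((exp (t • fromBlocks M (-(2 : ℝ) • (Qᵀ * Q)) (-H) (-Mᵀ))).toBlocks₂₂)⁻¹ *
          (exp (t • fromBlocks M (-(2 : ℝ) • (Qᵀ * Q)) (-H) (-Mᵀ))).toBlocks₂₁) i j)
      (((((exp (τ • fromBlocks M (-(2 : ℝ) • (Qᵀ * Q)) (-H) (-Mᵀ))).toBlocks₂₂)⁻¹ *
          (exp (τ • fromBlocks M (-(2 : ℝ) • (Qᵀ * Q)) (-H) (-Mᵀ))).toBlocks₂₁) * M +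
        Mᵀ * (((exp (τ • fromBlocks M (-(2 : ℝ) • (Qᵀ * Q)) (-H) (-Mᵀ))).toBlocks₂₂)⁻¹ *
          (exp (τ • fromBlocks M (-(2 : ℝ) • (Qᵀ * Q)) (-H) (-Mᵀ))).toBlocks₂₁) +
        (2 : ℝ) • ((((exp (τ • fromBlocks M (-(2 : ℝ) • (Qᵀ * Q)) (-H) (-Mᵀ))).toBlocks₂₂)⁻¹ *
          (exp (τ • fromBlocks M (-(2 : ℝ) • (Qᵀ * Q)) (-H) (-Mᵀ))).toBlocks₂₁) * Qᵀ * Q *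
          (((exp (τ • fromBlocks M (-(2 : ℝ) • (Qᵀ * Q)) (-H) (-Mᵀ))).toBlocks₂₂)⁻¹ *
          (exp (τ • fromBlocks M (-(2 : ℝ) • (Qᵀ * Q)) (-H) (-Mᵀ))).toBlocks₂₁)) - H) i j) τ := by
  set A := fromBlocks M (-(2 : ℝ) • (Qᵀ * Q)) (-H) (-Mᵀ) with hA
  set f : ℝ → Matrix (Fin d) (Fin d) ℝ := fun t => (exp (t • A)).toBlocks₂₂ with hf
  set g : ℝ → Matrix (Fin d) (Fin d) ℝ := fun t => (exp (t • A)).toBlocks₂₁ with hg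
  have hEd : HasDerivAt (fun t : ℝ => exp (t • A)) (exp (τ • A) * A) τ :=
    hasDerivAt_exp_smul_const A τ
  have hfd : HasDerivAt f ((exp (τ • A) * A).toBlocks₂₂) τ :=
    ((blkLM₂₂ d).toContinuousLinearMap.hasFDerivAt.comp_hasDerivAt τ hEd)
  have hgd : HasDerivAt g ((exp (τ • A) * A).toBlocks₂₁) τ :=
    ((blkLM₂₁ d).toContinuousLinearMap.hasFDerivAt.comp_hasDerivAt τ hEd)
  obtain ⟨u, hu⟩ := (Matrix.isUnit_iff_isUnit_det _).mpr h
  have huf : (u : Matrix (Fin d) (Fin d) ℝ) = f τ := hu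
  have huinv : ((u⁻¹ : (Matrix (Fin d) (Fin d) ℝ)ˣ) : Matrix (Fin d) (Fin d) ℝ) = (f τ)⁻¹ := by
    rw [Matrix.nonsing_inv_eq_ringInverse, ← huf, Ring.inverse_unit]
  have hinvd : HasDerivAt (fun t => Ring.inverse (f t))
      (-((f τ)⁻¹ * (exp (τ • A) * A).toBlocks₂₂ * (f τ)⁻¹)) τ := by
    have hR : HasFDerivAt Ring.inverse
        (-(ContinuousLinearMap.mulLeftRight ℝ (Matrix (Fin d) (Fin d) ℝ) ↑u⁻¹ ↑u⁻¹)) (f τ) :=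
      huf ▸ hasFDerivAt_ringInverse u
    have := hR.comp_hasDerivAt τ hfd
    simp [huinv, Function.comp_def, mul_assoc] at this ⊢
    exact this
  have hprod : HasDerivAt (fun t => (f t)⁻¹ * g t)
      (-((f τ)⁻¹ * (exp (τ • A) * A).toBlocks₂₂ * (f τ)⁻¹) * g τ +
        (f τ)⁻¹ * (exp (τ • A) * A).toBlocks₂₁) τ := by
    have := hinvd.mul hgd
    simp [Matrix.nonsing_inv_eq_ringInverse, Pi.mul_def] at this ⊢
    exact this
  have key : HasDerivAt (fun t => (f t)⁻¹ * g t)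
      (((f τ)⁻¹ * g τ) * M + Mᵀ * ((f τ)⁻¹ * g τ) +
        (2 : ℝ) • (((f τ)⁻¹ * g τ) * Qᵀ * Q * ((f τ)⁻¹ * g τ)) - H) τ := by
    convert hprod using 1
    have hb21 : (exp (τ • A) * A).toBlocks₂₁ = g τ * M + f τ * (-H) := by
      rw [hA, mul_fromBlocks_toBlocks₂₁]
    have hb22 : (exp (τ • A) * A).toBlocks₂₂ =
        g τ * (-(2 : ℝ) • (Qᵀ * Q)) + f τ * (-Mᵀ) := by
      rw [hA, mul_fromBlocks_toBlocks₂₂]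
    have hVf : (f τ)⁻¹ * f τ = 1 := Matrix.nonsing_inv_mul _ h
    have hVfX : ∀ X : Matrix (Fin d) (Fin d) ℝ, (f τ)⁻¹ * (f τ * X) = X := fun X => by
      rw [← mul_assoc, hVf, one_mul]
    rw [hb21, hb22]
    simp only [mul_add, add_mul, neg_mul, mul_neg, neg_add, neg_neg, mul_smul_comm,
      smul_mul_assoc, neg_smul, mul_assoc, hVfX, mul_one]
    module
  exact ((entryLM d i j).toContinuousLinearMap.hasFDerivAt.comp_hasDerivAt τ key)

end aux

/-- The function `B^{ZC}(τ) = B₂₂(τ)⁻¹ B₂₁(τ)`, where the blocks come from the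
block matrix exponential `exp(τ·[[M, −2QᵀQ],[−H, −Mᵀ]])`, satisfies the matrix
Riccati ODE `dB^{ZC}/dτ = B^{ZC}M + Mᵀ B^{ZC} + 2 B^{ZC} QᵀQ B^{ZC} − H`
(entrywise, at any `τ` where `B₂₂(τ)` is invertible), with `B^{ZC}(0) = 0`. -/
theorem zero_coupon_riccati_solution (d : ℕ) (M Q H : Matrix (Fin d) (Fin d) ℝ)
    (hH : H.PosSemidef)
    (E : ℝ → Matrix (Fin d ⊕ Fin d) (Fin d ⊕ Fin d) ℝ)
    (hE : E = fun τ => NormedSpace.exp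
      (τ • Matrix.fromBlocks M (-(2 : ℝ) • (Qᵀ * Q)) (-H) (-Mᵀ)))
    (BZC : ℝ → Matrix (Fin d) (Fin d) ℝ)
    (hBZC : BZC = fun τ => ((E τ).toBlocks₂₂)⁻¹ * (E τ).toBlocks₂₁) :
    (∀ τ : ℝ, IsUnit ((E τ).toBlocks₂₂).det →
      ∀ i j, HasDerivAt (fun t => BZC t i j)
        ((BZC τ * M + Mᵀ * BZC τ + (2 : ℝ) • (BZC τ * Qᵀ * Q * BZC τ) - H) i j) τ) ∧
    BZC 0 = 0 := by
  subst hE hBZC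
  constructor
  · intro τ h i j
    exact riccati_aux d M Q H τ h i j
  · simp only [zero_smul, NormedSpace.exp_zero]
    rw [← fromBlocks_one, toBlocks_fromBlocks₂₁, Matrix.mul_zero]
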